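/- Let n, c, d be positive integers with d dividing n, let (X_1,…,X_d) be a partition of [n] into d blocks each of size n/d, and let (A_1,…,A_c) be an arbitrary partition of [n] into c parts. Let p be a multilinear polynomial over F2 in variables x_1,…,x_n that is set-multilinear over (A_1,…,A_c). Then there exist sets S_1 ⊆ X_1, …, S_d ⊆ X_d, each of size at least n/(cd), such that every monomial of p contains at most one variable whose index lies in S_i, for each i ∈ [d]. Consequently, for every restriction that fixes all variables with index outside S_1 ∪ … ∪ S_d to arbitrary Boolean values, the restricted polynomial is set-multilinear over the partition (S_1,…,S_d) of its remaining variables. -/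
import Mathlib


/-- Coefficient of the monomial `M` in the unique multilinear (ANF) representation of `f`. -/
def anf {ι : Type*} [Fintype ι] [DecidableEq ι] (f : (ι → ZMod 2) → ZMod 2) (M : Finset ι) :
    ZMod 2 :=
  ∑ T ∈ M.powerset, f (fun i => if i ∈ T then 1 else 0)

/-- Evaluation of the multilinear polynomial with coefficient function `coeff`. -/
def evalPoly {n : ℕ} (coeff : Finset (Fin n) → ZMod 2) (x : Fin n → ZMod 2) : ZMod 2 :=
  ∑ M : Finset (Fin n), coeff M * ∏ j ∈ M, x j

lemma anf_evalPoly {n : ℕ} (coeff : Finset (Fin n) → ZMod 2) (M : Finset (Fin n)) :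
    anf (evalPoly coeff) M = coeff M := by
  unfold anf evalPoly
  have h1 : ∀ (T N : Finset (Fin n)),
      (∏ j ∈ N, (if j ∈ T then (1 : ZMod 2) else 0)) = if N ⊆ T then 1 else 0 := by
    intro T N
    split_ifs with h
    · exact Finset.prod_eq_one fun j hj => by simp [h hj]
    · obtain ⟨j, hjN, hjT⟩ := Finset.not_subset.mp h
      exact Finset.prod_eq_zero hjN (by simp [hjT])
  simp_rw [h1]
  rw [Finset.sum_comm]
  have h2 : ∀ N : Finset (Fin n),
      (∑ T ∈ M.powerset, coeff N * (if N ⊆ T then (1 : ZMod 2) else 0))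
        = if N = M then coeff M else 0 := by
    intro N
    rw [← Finset.mul_sum]
    have hcount : (∑ T ∈ M.powerset, (if N ⊆ T then (1 : ZMod 2) else 0))
        = ((M.powerset.filter fun T => N ⊆ T).card : ZMod 2) := by
      rw [← Finset.sum_filter]
      simp
    rw [hcount, ← Finset.Icc_eq_filter_powerset]
    by_cases hNM : N ⊆ M
    · rw [Finset.card_Icc_finset hNM]
      by_cases hEq : N = M
      · subst hEq; simp
      · have hlt : N.card < M.card := Finset.card_lt_card (lt_of_le_of_ne hNM hEq)
        have h0 : M.card - N.card ≠ 0 := by omega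
        have hz : ((2 ^ (M.card - N.card) : ℕ) : ZMod 2) = 0 := by
          push_cast
          rw [show ((2 : ZMod 2) = 0) by decide]
          exact zero_pow h0
        rw [if_neg hEq, hz, mul_zero]
    · have hempty : Finset.Icc N M = ∅ := by
        rw [Finset.Icc_eq_empty_iff]
        exact fun h => hNM h
      have hEq : N ≠ M := fun h => hNM (h ▸ subset_rfl)
      simp [hempty, hEq]
  simp_rw [h2]
  simp

theorem stmt2
    (n c d : ℕ) (hn : 0 < n) (hc : 0 < c) (hd : 0 < d) (hdvd : d ∣ n)
    (X : Fin d → Finset (Fin n))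
    (hXdisj : ∀ i j, i ≠ j → Disjoint (X i) (X j))
    (hXcover : Finset.univ.biUnion X = Finset.univ)
    (hXcard : ∀ i, (X i).card = n / d)
    (A : Fin c → Finset (Fin n))
    (hAdisj : ∀ i j, i ≠ j → Disjoint (A i) (A j))
    (hAcover : Finset.univ.biUnion A = Finset.univ)
    (coeff : Finset (Fin n) → ZMod 2)
    (hsml : ∀ M, coeff M ≠ 0 → ∀ j, (M ∩ A j).card ≤ 1) :
    ∃ S : Fin d → Finset (Fin n),
      (∀ i, S i ⊆ X i) ∧
      (∀ i, n / (c * d) ≤ (S i).card) ∧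
      (∀ M, coeff M ≠ 0 → ∀ i, (M ∩ S i).card ≤ 1) ∧
      (∀ u : Fin n → ZMod 2, ∀ M : Finset (Fin n),
        anf (fun x => evalPoly coeff (fun j => if ∃ i, j ∈ S i then x j else u j)) M ≠ 0 →
        ∀ i, (M ∩ S i).card ≤ 1) := by
  haveI : NeZero c := ⟨hc.ne'⟩
  have hchoice : ∀ i : Fin d, ∃ j : Fin c, n / (c * d) ≤ (X i ∩ A j).card := by
    intro i
    have hsum : (∑ j : Fin c, (X i ∩ A j).card) = (X i).card := by
      rw [← Finset.card_biUnion]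
      · congr 1
        ext v
        simp only [Finset.mem_biUnion, Finset.mem_inter, Finset.mem_univ, true_and]
        constructor
        · rintro ⟨j, hv, _⟩; exact hv
        · intro hv
          have : v ∈ Finset.univ.biUnion A := by rw [hAcover]; exact Finset.mem_univ v
          obtain ⟨j, _, hj⟩ := Finset.mem_biUnion.mp this
          exact ⟨j, hv, hj⟩
      · intro j hj j' hj' hne
        exact Finset.disjoint_of_subset_left Finset.inter_subset_right
          (Finset.disjoint_of_subset_right Finset.inter_subset_right (hAdisj j j' hne))
    obtain ⟨j, -, hj⟩ := Finset.exists_max_image Finset.univ (fun j => (X i ∩ A j).card)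
      ⟨0, Finset.mem_univ 0⟩
    refine ⟨j, ?_⟩
    have hle : (X i).card ≤ c * (X i ∩ A j).card := by
      calc (X i).card = ∑ j' : Fin c, (X i ∩ A j').card := hsum.symm
        _ ≤ ∑ _j' : Fin c, (X i ∩ A j).card :=
            Finset.sum_le_sum fun j' _ => hj j' (Finset.mem_univ j')
        _ = c * (X i ∩ A j).card := by simp [Finset.sum_const, mul_comm]
    calc n / (c * d) = n / d / c := by rw [Nat.div_div_eq_div_mul, mul_comm]
      _ = (X i).card / c := by rw [hXcard]
      _ ≤ c * (X i ∩ A j).card / c := Nat.div_le_div_right hle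
      _ = (X i ∩ A j).card := Nat.mul_div_cancel_left _ hc
  choose jmax hjmax using hchoice
  set S : Fin d → Finset (Fin n) := fun i => X i ∩ A (jmax i) with hS
  have hkey : ∀ M : Finset (Fin n), coeff M ≠ 0 → ∀ i, (M ∩ S i).card ≤ 1 := by
    intro M hM i
    calc (M ∩ S i).card ≤ (M ∩ A (jmax i)).card :=
          Finset.card_le_card (Finset.inter_subset_inter_left Finset.inter_subset_right)
      _ ≤ 1 := hsml M hM (jmax i)
  refine ⟨S, fun i => Finset.inter_subset_left, hjmax, hkey, ?_⟩
  intro u M hM i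
  set coeff' : Finset (Fin n) → ZMod 2 := fun N =>
    ∑ M' ∈ Finset.univ.filter
        (fun M' : Finset (Fin n) => M'.filter (fun v => ∃ i, v ∈ S i) = N),
      coeff M' * ∏ j ∈ M'.filter (fun v => ¬ ∃ i, v ∈ S i), u j with hcoeff'
  have hgeq : (fun x => evalPoly coeff (fun j => if ∃ i, j ∈ S i then x j else u j))
      = evalPoly coeff' := by
    funext x
    unfold evalPoly
    rw [← Finset.sum_fiberwise Finset.univ
      (fun M' : Finset (Fin n) => M'.filter (fun v => ∃ i, v ∈ S i))
      (fun M' => coeff M' * ∏ j ∈ M', (if ∃ i, j ∈ S i then x j else u j))]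
    apply Finset.sum_congr rfl
    intro N _
    rw [hcoeff', Finset.sum_mul]
    apply Finset.sum_congr rfl
    intro M' hM'
    have hfib : M'.filter (fun v => ∃ i, v ∈ S i) = N := (Finset.mem_filter.mp hM').2
    rw [Finset.prod_ite x u, hfib]
    ring
  rw [hgeq, anf_evalPoly, hcoeff'] at hM
  obtain ⟨M', hM'mem, hM'ne⟩ := Finset.exists_ne_zero_of_sum_ne_zero hM
  have hfib : M'.filter (fun v => ∃ i, v ∈ S i) = M := (Finset.mem_filter.mp hM'mem).2
  have hcne : coeff M' ≠ 0 := fun h => hM'ne (by rw [h, zero_mul])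
  have hMS : M ∩ S i = M' ∩ S i := by
    rw [← hfib]
    ext v
    simp only [Finset.mem_inter, Finset.mem_filter]
    constructor
    · rintro ⟨⟨hv, -⟩, hvS⟩; exact ⟨hv, hvS⟩
    · rintro ⟨hv, hvS⟩; exact ⟨⟨hv, ⟨i, hvS⟩⟩, hvS⟩
  rw [hMS]
  exact hkey M' hcne i
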